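/- If every maximal nilpotent-of-class-at-most-k subgroup of a group G is malnormal, then for any two nilpotent subgroups K₁, K₂ of G of class at most k with K₁ ∩ K₂ ≠ 1, the subgroup ⟨K₁, K₂⟩ is nilpotent of class at most k. -/

import Mathlib

variable {G : Type*} [Group G]

/-- A subgroup is `nil_k`: nilpotent of class at most `k` (i.e. γ_{k+1} = 1). -/
def SubNilK (k : ℕ) (H : Subgroup G) : Prop := lowerCentralSeries H k = ⊥

/-- A subgroup `H ≤ G` is malnormal: `H ∩ g⁻¹Hg = 1` for all `g ∉ H`. -/
def Malnormal (H : Subgroup G) : Prop :=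
  ∀ g ∉ H, ∀ y ∈ H, g * y * g⁻¹ ∈ H → y = 1

/-- `H` is a maximal nil_k subgroup of `G`. -/
def MaxNilK (k : ℕ) (H : Subgroup G) : Prop :=
  SubNilK k H ∧ ∀ K : Subgroup G, SubNilK k K → H ≤ K → K = H

/-- `G` is NT_k: any two nil_k subgroups with nontrivial intersection generate
a nil_k subgroup. -/
def IsNTk (k : ℕ) (G : Type*) [Group G] : Prop :=
  ∀ K₁ K₂ : Subgroup G, SubNilK k K₁ → SubNilK k K₂ → K₁ ⊓ K₂ ≠ ⊥ →
    SubNilK k (K₁ ⊔ K₂)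

/-- `G` is CSN_k: every maximal nil_k subgroup is malnormal. -/
def IsCSNk (k : ℕ) (G : Type*) [Group G] : Prop :=
  ∀ H : Subgroup G, MaxNilK k H → Malnormal H

/-- `C^k_G(x) = { y : ⟨x, y⟩ is nilpotent of class at most k }`. -/
def CkSet (k : ℕ) (x : G) : Set G :=
  { y | SubNilK k (Subgroup.closure {x, y}) }

/-- Image of the lower central series under the inclusion of subgroups is monotone. -/
lemma lcs_map_mono {A B : Subgroup G} (h : A ≤ B) (n : ℕ) :
    lowerCentralSeries A n ≤ lowerCentralSeries B n := by
  induction n with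
  | zero => exact h
  | succ n ih => exact Subgroup.commutator_mono ih h

lemma SubNilK.mono {k : ℕ} {A B : Subgroup G} (h : A ≤ B) (hB : SubNilK k B) :
    SubNilK k A := by
  have h1 : lowerCentralSeries A k ≤ ⊥ := by
    have := lcs_map_mono h k
    rwa [hB] at this
  rw [SubNilK]
  exact le_bot_iff.mp h1

lemma subNilK_sSup_chain (k : ℕ) (c : Set (Subgroup G)) (hne : c.Nonempty)
    (hchain : IsChain (· ≤ ·) c) (hc : ∀ H ∈ c, SubNilK k H) : SubNilK k (sSup c) := by
  set S := sSup c
  haveI : Nonempty c := hne.to_subtype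
  set L : c → ℕ → Subgroup G :=
    fun H n => lowerCentralSeries (H : Subgroup G) n with hL
  have hdir : ∀ n, Directed (· ≤ ·) (fun H : c => L H n) := by
    intro n H₁ H₂
    rcases hchain.total H₁.2 H₂.2 with h | h
    · exact ⟨H₂, lcs_map_mono h n, le_rfl⟩
    · exact ⟨H₁, le_rfl, lcs_map_mono h n⟩
  have key : ∀ n, lowerCentralSeries S n ≤ ⨆ H : c, L H n := by
    intro n
    induction n with
    | zero =>
      intro x hx
      have hy : x ∈ S := hx
      obtain ⟨H, hHc, hyH⟩ := Subgroup.mem_sSup_of_directedOn hne hchain.directedOn |>.mp hy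
      refine Subgroup.mem_iSup_of_directed (hdir 0) |>.mpr ⟨⟨H, hHc⟩, ?_⟩
      exact hyH
    | succ n ih =>
      have hdef : lowerCentralSeries S (n + 1) = ⁅lowerCentralSeries S n, S⁆ := rfl
      rw [hdef]
      refine Subgroup.commutator_le.mpr ?_
      intro a ha b hb
      have ha' : a ∈ ⨆ H : c, L H n := ih ha
      obtain ⟨H₁, ha₁⟩ := Subgroup.mem_iSup_of_directed (hdir n) |>.mp ha'
      have hb' : b ∈ S := hb
      obtain ⟨H₂, hH₂c, hyH₂⟩ :=
        Subgroup.mem_sSup_of_directedOn hne hchain.directedOn |>.mp hb'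
      obtain ⟨H₃, h13, h23⟩ : ∃ H₃ : c, (H₁ : Subgroup G) ≤ H₃ ∧ H₂ ≤ H₃ := by
        rcases hchain.total H₁.2 hH₂c with h | h
        · exact ⟨⟨H₂, hH₂c⟩, h, le_rfl⟩
        · exact ⟨H₁, le_rfl, h⟩
      have ha₃ : a ∈ L H₃ n := lcs_map_mono h13 n ha₁
      have hy₃ : b ∈ (H₃ : Subgroup G) := h23 hyH₂
      refine le_iSup (fun H : c => L H (n + 1)) H₃ ?_
      have hdef3 : lowerCentralSeries (H₃ : Subgroup G) (n + 1)
          = ⁅lowerCentralSeries (H₃ : Subgroup G) n, (H₃ : Subgroup G)⁆ := rfl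
      show a * b * a⁻¹ * b⁻¹ ∈ lowerCentralSeries (H₃ : Subgroup G) (n + 1)
      rw [hdef3]
      exact Subgroup.commutator_mem_commutator ha₃ hy₃
  have hbot : (⨆ H : c, L H k) = ⊥ := by
    refine le_bot_iff.mp (iSup_le fun H => ?_)
    exact (hc H H.2).le
  rw [SubNilK]
  exact le_bot_iff.mp (hbot ▸ key k)

theorem stmt0 (k : ℕ) (hk : 0 < k) {G : Type*} [Group G]
    (hmal : ∀ H : Subgroup G, MaxNilK k H → Malnormal H)
    (K₁ K₂ : Subgroup G) (h₁ : SubNilK k K₁) (h₂ : SubNilK k K₂)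
    (hint : K₁ ⊓ K₂ ≠ ⊥) :
    SubNilK k (K₁ ⊔ K₂) := by
  -- find a maximal nil_k subgroup H containing K₁
  obtain ⟨H, hK₁H, hHmem, hHmax⟩ :
      ∃ H : Subgroup G, K₁ ≤ H ∧ SubNilK k H ∧
        ∀ K : Subgroup G, SubNilK k K → H ≤ K → K = H := by
    obtain ⟨H, hle, hmax⟩ := zorn_le_nonempty₀ {H : Subgroup G | SubNilK k H}
      (fun c hcs hchain y hy =>
        ⟨sSup c, subNilK_sSup_chain k c ⟨y, hy⟩ hchain (fun H hH => hcs hH),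
          fun z hz => le_sSup hz⟩) K₁ h₁
    exact ⟨H, hle, hmax.1, fun K hK hHK => le_antisymm (hmax.2 hK hHK) hHK⟩
  have hMax : MaxNilK k H := ⟨hHmem, hHmax⟩
  have hmalH : Malnormal H := hmal H hMax
  -- a nontrivial element of K₁ ⊓ K₂
  obtain ⟨z, hz, hz1⟩ : ∃ z, z ∈ K₁ ⊓ K₂ ∧ z ≠ 1 := by
    by_contra h
    push_neg at h
    exact hint (Subgroup.eq_bot_iff_forall _ |>.mpr h)
  have hzH : z ∈ H := hK₁H hz.1
  have hzK₂ : z ∈ K₂ := hz.2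
  -- show K₂ ≤ H using the normalizer condition in K₂
  have hK₂H : K₂ ≤ H := by
    by_contra hnle
    haveI : Group.IsNilpotent ↥K₂ := (Subgroup.isNilpotent_iff_lowerCentralSeries K₂).mpr ⟨k, h₂⟩
    have hNC : NormalizerCondition ↥K₂ := normalizerCondition_of_isNilpotent
    set D : Subgroup ↥K₂ := (H ⊓ K₂).subgroupOf K₂ with hD
    obtain ⟨b, hbK₂, hbH⟩ : ∃ b, b ∈ K₂ ∧ b ∉ H := by
      by_contra h
      push_neg at h
      exact hnle h
    have hDlt : D < ⊤ := lt_top_iff_ne_top.mpr (fun htop => hbH (by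
      have : (⟨b, hbK₂⟩ : ↥K₂) ∈ D := htop ▸ Subgroup.mem_top _
      exact (Subgroup.mem_subgroupOf.mp this).1))
    obtain ⟨m, hmN, hmD⟩ := SetLike.exists_of_lt (hNC D hDlt)
    have hmH : (m : G) ∉ H := fun hmH => hmD (Subgroup.mem_subgroupOf.mpr ⟨hmH, m.2⟩)
    have hzD : (⟨z, hzK₂⟩ : ↥K₂) ∈ D := Subgroup.mem_subgroupOf.mpr ⟨hzH, hzK₂⟩
    have hconj : m * (⟨z, hzK₂⟩ : ↥K₂) * m⁻¹ ∈ D :=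
      (Subgroup.mem_normalizer_iff.mp hmN _).mp hzD
    have hconjH : (m : G) * z * (m : G)⁻¹ ∈ H := (Subgroup.mem_subgroupOf.mp hconj).1
    exact hz1 (hmalH (m : G) hmH z hzH hconjH)
  have : K₁ ⊔ K₂ ≤ H := sup_le hK₁H hK₂H
  exact SubNilK.mono this hHmem
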